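/- Let p be a prime and let G be a group such that G/Z(G) ≅ C_p × C_p, G is generated by {x, y} together with Z(G) where x^p, y^p ∈ Z(G), and G is the internal direct product of subgroups D and A (every element of D commutes with every element of A, D ∩ A = {1}, DA = G) with D nonabelian. Then there exist x₁, y₁ ∈ D and z, z' ∈ Z(G) such that x₁ = x·z and y₁ = y·z'. -/

import Mathlib

theorem exists_representatives_in_factor (p : ℕ) (hp : p.Prime) (G : Type*) [Group G]
    (hq : Nonempty ((G ⧸ Subgroup.center G) ≃*
      Multiplicative (ZMod p) × Multiplicative (ZMod p)))
    (x y : G)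
    (hxp : x ^ p ∈ Subgroup.center G)
    (hyp : y ^ p ∈ Subgroup.center G)
    (hgen : Subgroup.closure (({x, y} : Set G) ∪ (Subgroup.center G : Set G)) = ⊤)
    (D A : Subgroup G)
    (hcomm : ∀ d ∈ D, ∀ a ∈ A, Commute d a)
    (hint : D ⊓ A = ⊥)
    (hprod : ∀ g : G, ∃ d ∈ D, ∃ a ∈ A, g = d * a)
    (hDnonab : ∃ d ∈ D, ∃ d' ∈ D, ¬ Commute d d') :
    ∃ x₁ ∈ D, ∃ y₁ ∈ D, ∃ z ∈ Subgroup.center G, ∃ z' ∈ Subgroup.center G,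
      x₁ = x * z ∧ y₁ = y * z' := by
  classical
  obtain ⟨e⟩ := hq
  set π := QuotientGroup.mk' (Subgroup.center G) with hπ
  have hcardQ : Nat.card (G ⧸ Subgroup.center G) = p ^ 2 := by
    rw [Nat.card_congr e.toEquiv, Nat.card_prod]
    rw [show Nat.card (Multiplicative (ZMod p)) = Nat.card (ZMod p) from rfl, Nat.card_zmod]
    ring
  have hfin : Finite (G ⧸ Subgroup.center G) := by
    refine Nat.finite_of_card_ne_zero ?_
    rw [hcardQ]
    exact pow_ne_zero _ hp.pos.ne'
  -- The image of D in G/Z(G) is everything.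
  have hDtop : D.map π = ⊤ := by
    by_contra hne
    have hdvd : Nat.card (D.map π) ∣ p ^ 2 :=
      hcardQ ▸ Subgroup.card_subgroup_dvd_card _
    obtain ⟨m, hm, hcard⟩ := (Nat.dvd_prime_pow hp).mp hdvd
    have hcyc : IsCyclic (D.map π) := by
      interval_cases m
      · have h1 : (D.map π) = ⊥ := Subgroup.card_eq_one.mp (by simpa using hcard)
        rw [h1]
        infer_instance
      · haveI := Fact.mk hp
        exact isCyclic_of_prime_card (by simpa using hcard)
      · exact absurd (Subgroup.eq_top_of_card_eq _ (hcard.trans hcardQ.symm)) hne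
    -- Then D is abelian, contradiction.
    have hr : (π.comp D.subtype).range = D.map π := by
      rw [MonoidHom.range_comp, Subgroup.range_subtype]
    have hcyc' : IsCyclic (π.comp D.subtype).range := hr ▸ hcyc
    have habD : ∀ a b : D, a * b = b * a := by
      refine commutative_of_cyclic_center_quotient (π.comp D.subtype).rangeRestrict ?_
      intro d hd
      have hker : π (d : G) = 1 := by
        have := (MonoidHom.ker_rangeRestrict (π.comp D.subtype)) ▸ hd
        simpa [MonoidHom.mem_ker] using this
      have hdZ : (d : G) ∈ Subgroup.center G :=
        (QuotientGroup.ker_mk' (Subgroup.center G)) ▸ MonoidHom.mem_ker.mpr hker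
      rw [Subgroup.mem_center_iff]
      intro g
      exact Subtype.ext (Subgroup.mem_center_iff.mp hdZ g)
    obtain ⟨d, hd, d', hd', hnc⟩ := hDnonab
    exact hnc (Subtype.ext_iff.mp (habD ⟨d, hd⟩ ⟨d', hd'⟩))
  -- Every element of A is central.
  have hA : ∀ a ∈ A, a ∈ Subgroup.center G := by
    intro a ha
    rw [Subgroup.mem_center_iff]
    intro g
    have hg : π g ∈ D.map π := hDtop ▸ Subgroup.mem_top _
    obtain ⟨d, hd, hdg⟩ := hg
    have hz : d⁻¹ * g ∈ Subgroup.center G := by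
      have h1 : π (d⁻¹ * g) = 1 := by rw [map_mul, map_inv, hdg]; group
      exact (QuotientGroup.ker_mk' (Subgroup.center G)) ▸ MonoidHom.mem_ker.mpr h1
    have hcd : Commute a d := (hcomm d hd a ha).symm
    have hcz : Commute a (d⁻¹ * g) := Subgroup.mem_center_iff.mp hz a
    calc g * a = d * (d⁻¹ * g) * a := by group
    _ = d * a * (d⁻¹ * g) := by rw [mul_assoc, ← hcz.eq, ← mul_assoc]
    _ = a * d * (d⁻¹ * g) := by rw [hcd.eq]
    _ = a * g := by group
  obtain ⟨dx, hdx, ax, hax, hx⟩ := hprod x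
  obtain ⟨dy, hdy, ay, hay, hy⟩ := hprod y
  refine ⟨dx, hdx, dy, hdy, ax⁻¹, Subgroup.inv_mem _ (hA ax hax),
    ay⁻¹, Subgroup.inv_mem _ (hA ay hay), ?_, ?_⟩
  · rw [hx]; group
  · rw [hy]; group
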